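/- For any distribution τ with mean u_τ ≤ u_π − ε (for 0 < ε < u_π − u_min) and finite D_KL(τ||π), the ratio (u_π − u_τ)/D_KL(τ||π) is at most (u_π − u_{θ_min})/d(θ_min), where θ_min > 0 satisfies u_{θ_min} = u_π − ε; i.e., τ_{θ_min} maximizes the impact-to-divergence ratio. -/

import Mathlib

open Finset Real

private lemma term_gibbs {a t : ℝ} (ha : 0 ≤ a) (ht : 0 < t) :
    a - t ≤ a * Real.log (a / t) := by
  rcases eq_or_lt_of_le ha with h | h
  · rw [← h]; simp; linarith
  · have h1 : Real.log (t / a) ≤ t / a - 1 := Real.log_le_sub_one_of_pos (by positivity)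
    have h2 : Real.log (a / t) = - Real.log (t / a) := by
      rw [← Real.log_inv]; congr 1; field_simp
    have h3 : a * (t / a) = t := by field_simp
    have h4 : a * Real.log (t / a) ≤ a * (t / a - 1) :=
      mul_le_mul_of_nonneg_left h1 (le_of_lt h)
    rw [h2]; nlinarith
  
private lemma term_gibbs_strict {a t : ℝ} (ha : 0 ≤ a) (ht : 0 < t) (hne : a ≠ t) :
    a - t < a * Real.log (a / t) := by
  rcases eq_or_lt_of_le ha with h | h
  · rw [← h]; simp; linarith
  · have hta : t / a ≠ 1 := by
      intro hc; apply hne; field_simp at hc; linarith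
    have h1 : Real.log (t / a) < t / a - 1 :=
      Real.log_lt_sub_one_of_pos (by positivity) hta
    have h2 : Real.log (a / t) = - Real.log (t / a) := by
      rw [← Real.log_inv]; congr 1; field_simp
    have h3 : a * (t / a) = t := by field_simp
    have h4 : a * Real.log (t / a) < a * (t / a - 1) :=
      (mul_lt_mul_iff_right₀ h).mpr h1
    rw [h2]; nlinarith

private lemma gibbs_sum (U : Finset ℝ) (a t : ℝ → ℝ) (ha : ∀ u ∈ U, 0 ≤ a u)
    (ht : ∀ u ∈ U, 0 < t u) (hs : ∑ u ∈ U, a u = ∑ u ∈ U, t u) :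
    0 ≤ ∑ u ∈ U, a u * Real.log (a u / t u) := by
  have h := Finset.sum_le_sum (fun u hu => term_gibbs (ha u hu) (ht u hu))
  rw [Finset.sum_sub_distrib] at h
  linarith

private lemma gibbs_sum_strict (U : Finset ℝ) (a t : ℝ → ℝ) (ha : ∀ u ∈ U, 0 ≤ a u)
    (ht : ∀ u ∈ U, 0 < t u) (hs : ∑ u ∈ U, a u = ∑ u ∈ U, t u)
    (hne : ∃ u ∈ U, a u ≠ t u) :
    0 < ∑ u ∈ U, a u * Real.log (a u / t u) := by
  obtain ⟨u0, hu0, hne0⟩ := hne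
  have h := Finset.sum_lt_sum (f := fun u => a u - t u)
    (g := fun u => a u * Real.log (a u / t u))
    (fun u hu => term_gibbs (ha u hu) (ht u hu))
    ⟨u0, hu0, term_gibbs_strict (ha u0 hu0) (ht u0 hu0) hne0⟩
  rw [Finset.sum_sub_distrib] at h
  linarith

/-- For any distribution `q` with mean `u_q ≤ u_p − ε`
(for `0 < ε < u_p − u_min`) and finite KL divergence from `p`, the
impact-to-divergence ratio `(u_p − u_q)/D_KL(q‖p)` is at most
`(u_p − u_{θmin})/d(θmin)`, where `θmin > 0` satisfies `u_{θmin} = u_p − ε`;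
i.e. the tilt `τ_{θmin}` maximizes the impact-to-divergence ratio. -/
theorem tilt_maximizes_impact_ratio (U : Finset ℝ) (hU : U.Nonempty)
    (p : ℝ → ℝ) (hpos : ∀ u ∈ U, 0 < p u) (hsum : ∑ u ∈ U, p u = 1)
    (h2 : ∃ u ∈ U, ∃ v ∈ U, u ≠ v)
    (b : ℝ → ℝ) (hb : ∀ t : ℝ, b t = Real.log (∑ u ∈ U, p u * Real.exp (-t * u)))
    (ε : ℝ) (hε0 : 0 < ε) (hε : ε < (∑ u ∈ U, u * p u) - U.min' hU)
    (θmin : ℝ) (hθmin : 0 < θmin)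
    (hθmean : -(deriv b θmin) = (∑ u ∈ U, u * p u) - ε)
    (q : ℝ → ℝ) (hq0 : ∀ u ∈ U, 0 ≤ q u) (hq1 : ∑ u ∈ U, q u = 1)
    (hqmean : ∑ u ∈ U, u * q u ≤ (∑ u ∈ U, u * p u) - ε) :
    ((∑ u ∈ U, u * p u) - ∑ u ∈ U, u * q u) /
        (∑ u ∈ U, q u * Real.log (q u / p u)) ≤
      ((∑ u ∈ U, u * p u) - (-(deriv b θmin))) /
        (θmin * deriv b θmin - b θmin) := by
  set θ := θmin with hθdef
  set μp := ∑ u ∈ U, u * p u with hμp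
  set S : ℝ := ∑ u ∈ U, p u * Real.exp (-θ * u) with hSdef
  have hSpos : 0 < S :=
    Finset.sum_pos (fun u hu => mul_pos (hpos u hu) (Real.exp_pos _)) hU
  -- tilted distribution
  set τ : ℝ → ℝ := fun u => p u * Real.exp (-θ * u) / S with hτdef
  have hτpos : ∀ u ∈ U, 0 < τ u := fun u hu => by
    have := hpos u hu; positivity
  have hτ1 : ∑ u ∈ U, τ u = 1 := by
    rw [hτdef, ← Finset.sum_div, ← hSdef, div_self (ne_of_gt hSpos)]
  -- derivative of b
  have hF : HasDerivAt (fun t => ∑ u ∈ U, p u * Real.exp (-t * u))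
      (∑ u ∈ U, p u * (Real.exp (-θ * u) * -u)) θ := by
    apply HasDerivAt.fun_sum
    intro u hu
    have h1 : HasDerivAt (fun t : ℝ => -t * u) (-u) θ := by
      simpa using ((hasDerivAt_id θ).neg.mul_const u)
    exact h1.exp.const_mul (p u)
  have hbfun : b = fun t => Real.log (∑ u ∈ U, p u * Real.exp (-t * u)) := funext hb
  have hb' : HasDerivAt b ((∑ u ∈ U, p u * (Real.exp (-θ * u) * -u)) / S) θ := by
    rw [hbfun]
    exact hF.log (ne_of_gt hSpos)
  have hderiv : deriv b θ = (∑ u ∈ U, p u * (Real.exp (-θ * u) * -u)) / S := hb'.deriv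
  have hbθ : b θ = Real.log S := hb θ
  -- mean of τ
  have hτmean : ∑ u ∈ U, u * τ u = μp - ε := by
    have : ∑ u ∈ U, u * τ u = -(deriv b θ) := by
      rw [hderiv, ← neg_div, ← Finset.sum_neg_distrib, Finset.sum_div]
      apply Finset.sum_congr rfl
      intro u hu
      rw [hτdef]
      ring
    rw [this, hθmean]
  -- key identity: for any nonneg r, ∑ r log(r/τ) = ∑ r log(r/p) + θ * ∑ u r + (∑ r) log S
  have key : ∀ r : ℝ → ℝ, (∀ u ∈ U, 0 ≤ r u) →
      ∑ u ∈ U, r u * Real.log (r u / τ u) =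
        (∑ u ∈ U, r u * Real.log (r u / p u)) + θ * (∑ u ∈ U, u * r u)
          + (∑ u ∈ U, r u) * Real.log S := by
    intro r hr
    rw [Finset.mul_sum, Finset.sum_mul, ← Finset.sum_add_distrib, ← Finset.sum_add_distrib]
    apply Finset.sum_congr rfl
    intro u hu
    rcases eq_or_lt_of_le (hr u hu) with h | h
    · rw [← h]; ring
    · have hτu := hτpos u hu
      have hpu := hpos u hu
      have hlogτ : Real.log (τ u) = Real.log (p u) + (-θ * u) - Real.log S := by
        rw [hτdef]
        rw [Real.log_div (by positivity) (ne_of_gt hSpos),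
            Real.log_mul (ne_of_gt hpu) (ne_of_gt (Real.exp_pos _)), Real.log_exp]
      rw [Real.log_div (ne_of_gt h) (ne_of_gt hτu),
          Real.log_div (ne_of_gt h) (ne_of_gt hpu), hlogτ]
      ring
  -- abbreviations
  set μq := ∑ u ∈ U, u * q u with hμq
  set K := ∑ u ∈ U, q u * Real.log (q u / p u) with hK
  set D := θ * deriv b θ - b θ with hD
  have hDval : D = -θ * (μp - ε) - Real.log S := by
    rw [hD, hbθ]
    have : deriv b θ = -(μp - ε) := by linarith [hθmean]
    rw [this]; ring
  -- D = KL(τ ‖ p) > 0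
  have hτKL : ∑ u ∈ U, τ u * Real.log (τ u / p u) = D := by
    have h0 : ∑ u ∈ U, τ u * Real.log (τ u / τ u) = 0 := by
      apply Finset.sum_eq_zero
      intro u hu
      rw [div_self (ne_of_gt (hτpos u hu)), Real.log_one, mul_zero]
    have h1 := key τ (fun u hu => le_of_lt (hτpos u hu))
    rw [h0, hτ1, hτmean] at h1
    rw [hDval]; linarith
  have hτnep : ∃ u ∈ U, τ u ≠ p u := by
    by_contra hc
    push_neg at hc
    obtain ⟨u, hu, v, hv, huv⟩ := h2
    have hu' : Real.exp (-(θ * u)) = S := by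
      have := hc u hu
      rw [hτdef] at this
      field_simp at this
      have h := mul_left_cancel₀ (ne_of_gt (hpos u hu)) this
      linarith
    have hv' : Real.exp (-(θ * v)) = S := by
      have := hc v hv
      rw [hτdef] at this
      field_simp at this
      have h := mul_left_cancel₀ (ne_of_gt (hpos v hv)) this
      linarith
    have heq : -(θ * u) = -(θ * v) := Real.exp_injective (by rw [hu', hv'])
    exact huv (mul_left_cancel₀ (ne_of_gt hθmin) (neg_injective heq))
  have hDpos : 0 < D := by
    rw [← hτKL]
    exact gibbs_sum_strict U τ p (fun u hu => le_of_lt (hτpos u hu)) hpos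
      (by rw [hτ1, hsum]) hτnep
  -- Gibbs for q: K ≥ -θ μq - log S
  have hqKL : K ≥ -θ * μq - Real.log S := by
    have h1 := key q hq0
    have h2 := gibbs_sum U q τ hq0 hτpos (by rw [hq1, hτ1])
    rw [h1, hq1] at h2
    linarith
  -- Gibbs for p: log S ≥ -θ μp
  have hpKL : Real.log S ≥ -θ * μp := by
    have h0 : ∑ u ∈ U, p u * Real.log (p u / p u) = 0 := by
      apply Finset.sum_eq_zero
      intro u hu
      rw [div_self (ne_of_gt (hpos u hu)), Real.log_one, mul_zero]
    have h1 := key p (fun u hu => le_of_lt (hpos u hu))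
    have h2 := gibbs_sum U p τ (fun u hu => le_of_lt (hpos u hu)) hτpos
      (by rw [hsum, hτ1])
    rw [h1, h0, hsum] at h2
    linarith
  -- D ≤ θ ε
  have hDle : D ≤ θ * ε := by
    rw [hDval]; nlinarith
  -- K ≥ D + θ * ((μp - μq) - ε)
  have hKge : K ≥ D + θ * ((μp - μq) - ε) := by
    rw [hDval]; nlinarith
  have hA : μp - μq ≥ ε := by linarith [hqmean]
  have hKpos : 0 < K := by nlinarith
  -- goal reduces to (μp - μq)/K ≤ ε/D
  have hgoal2 : (μp - (-(deriv b θ))) = ε := by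
    rw [hθmean]; ring
  rw [hgoal2]
  rw [div_le_div_iff₀ hKpos hDpos]
  nlinarith [mul_le_mul_of_nonneg_right hDle (by linarith : (0:ℝ) ≤ μp - μq - ε),
    mul_le_mul_of_nonneg_left hKge (le_of_lt hε0)]
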